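/- For every vector g ∈ ℝ^d, every x ∈ ℝ^d, and every λ ≥ 0: ⟨g, −g − λ·𝕀(g ⊙ x ≥ 0) ⊙ x⟩ = −‖g‖₂² − λ‖(g ⊙ x)^+‖₁ ≤ 0. In particular, along the continuous-time dynamics ẋ = −∇f(x) − λ𝕀(∇f(x) ⊙ x ≥ 0) ⊙ x of SGD with cautious weight decay, the function H(x) = f(x) has derivative dH/dt = −‖∇f(x)‖₂² − λ‖(∇f(x) ⊙ x)^+‖₁ ≤ 0 whenever f is differentiable at x. -/
import Mathlib

/-- descent identity for SGD with cautious weight decay; the derivative of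
`H(x) = f(x)` along `ẋ = -∇f(x) - λ·𝕀(∇f(x)⊙x ≥ 0)⊙x` is
`-‖∇f(x)‖₂² - λ‖(∇f(x)⊙x)⁺‖₁ ≤ 0` (stated for an arbitrary vector `g`, in particular
for `g = ∇f(x)`). -/
theorem sgd_cwd_lyapunov_derivative {d : ℕ} (g x : Fin d → ℝ) (lam : ℝ) (hlam : 0 ≤ lam) :
    (∑ i, g i * (-g i - lam * (if 0 ≤ g i * x i then (1 : ℝ) else 0) * x i))
        = -(∑ i, (g i) ^ 2) - lam * ∑ i, max (g i * x i) 0 ∧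
      (∑ i, g i * (-g i - lam * (if 0 ≤ g i * x i then (1 : ℝ) else 0) * x i)) ≤ 0 := by
  have key : (∑ i, g i * (-g i - lam * (if 0 ≤ g i * x i then (1 : ℝ) else 0) * x i))
      = -(∑ i, (g i) ^ 2) - lam * ∑ i, max (g i * x i) 0 := by
    rw [← Finset.sum_neg_distrib, Finset.mul_sum, ← Finset.sum_sub_distrib]
    apply Finset.sum_congr rfl
    intro i _
    by_cases h : 0 ≤ g i * x i
    · simp [h, max_eq_left h]; ring
    · simp [h, max_eq_right (le_of_lt (lt_of_not_ge h))]; ring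
  refine ⟨key, key ▸ ?_⟩
  have h1 : (0:ℝ) ≤ ∑ i, (g i) ^ 2 := Finset.sum_nonneg fun i _ => sq_nonneg _
  have h2 : (0:ℝ) ≤ ∑ i, max (g i * x i) 0 :=
    Finset.sum_nonneg fun i _ => le_max_right _ _
  nlinarith [mul_nonneg hlam h2]
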